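/- For all s ≥ 1 and λ ≥ 1, with μ_ℓ(s) := 2(s−1)^ℓ/(s+1)^{ℓ+1} (convention 0^0 = 1), the Kullback–Leibler divergence satisfies Σ_{ℓ=0}^∞ μ_ℓ(s) · log( μ_ℓ(s)/μ_ℓ(λs) ) ≤ log( (1+λ)/2 ), with equality at s = 1. (Terms with μ_ℓ(s) = 0 are read as 0.) -/

import Mathlib

/-- Eigenvalue sequence (in the Fock basis) of the single-mode thermal Gaussian state with
covariance matrix `s·1₂`: `μ_ℓ(s) = 2(s-1)^ℓ/(s+1)^{ℓ+1}` (with `0^0 = 1`). -/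
noncomputable def thermalEigenvalue (s : ℝ) (ℓ : ℕ) : ℝ :=
  2 * (s - 1) ^ ℓ / (s + 1) ^ (ℓ + 1)

open Real in
lemma thermal_sum_eq (s lam : ℝ) (hs : 1 < s) (hlam : 1 ≤ lam) :
    ∑' ℓ : ℕ, thermalEigenvalue s ℓ *
        Real.log (thermalEigenvalue s ℓ / thermalEigenvalue (lam * s) ℓ)
      = (s - 1) / 2 * Real.log ((s - 1) * (lam * s + 1) / ((s + 1) * (lam * s - 1)))
        + Real.log ((lam * s + 1) / (s + 1)) := by
  have hs1 : (0:ℝ) < s - 1 := by linarith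
  have hs2 : (0:ℝ) < s + 1 := by linarith
  have hls : 1 < lam * s := by nlinarith
  have hl1 : (0:ℝ) < lam * s - 1 := by linarith
  have hl2 : (0:ℝ) < lam * s + 1 := by linarith
  set t : ℝ := (s - 1) / (s + 1) with ht
  have ht0 : 0 < t := div_pos hs1 hs2
  have ht1 : t < 1 := (div_lt_one hs2).2 (by linarith)
  set R : ℝ := (s - 1) * (lam * s + 1) / ((s + 1) * (lam * s - 1)) with hR
  set C : ℝ := (lam * s + 1) / (s + 1) with hC
  have hRpos : 0 < R := div_pos (by positivity) (by positivity)
  have hCpos : 0 < C := div_pos hl2 hs2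
  have hterm : ∀ ℓ : ℕ, thermalEigenvalue s ℓ *
      Real.log (thermalEigenvalue s ℓ / thermalEigenvalue (lam * s) ℓ)
      = (2 / (s + 1)) * (Real.log R * ((ℓ:ℝ) * t ^ ℓ) + Real.log C * t ^ ℓ) := by
    intro ℓ
    have hμ : thermalEigenvalue s ℓ = (2 / (s + 1)) * t ^ ℓ := by
      simp only [thermalEigenvalue, ht, div_pow, pow_succ]
      field_simp
    have hratio : thermalEigenvalue s ℓ / thermalEigenvalue (lam * s) ℓ = R ^ ℓ * C := by
      simp only [thermalEigenvalue, hR, hC, div_pow, pow_succ, mul_pow]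
      field_simp
    rw [hratio, hμ, Real.log_mul (by positivity) (by positivity), Real.log_pow]
    ring
  rw [tsum_congr hterm]
  have hsum1 : HasSum (fun ℓ : ℕ => (ℓ:ℝ) * t ^ ℓ) (t / (1 - t) ^ 2) :=
    hasSum_coe_mul_geometric_of_norm_lt_one (by rw [Real.norm_eq_abs, abs_of_pos ht0]; exact ht1)
  have hsum2 : HasSum (fun ℓ : ℕ => t ^ ℓ) ((1 - t)⁻¹) :=
    hasSum_geometric_of_lt_one ht0.le ht1
  have hsum : HasSum (fun ℓ : ℕ => (2 / (s + 1)) *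
      (Real.log R * ((ℓ:ℝ) * t ^ ℓ) + Real.log C * t ^ ℓ))
      ((2 / (s + 1)) * (Real.log R * (t / (1 - t) ^ 2) + Real.log C * (1 - t)⁻¹)) :=
    (((hsum1.mul_left _).add (hsum2.mul_left _)).mul_left _)
  rw [hsum.tsum_eq]
  have h1t : 1 - t = 2 / (s + 1) := by rw [ht]; field_simp; ring
  rw [h1t, ht]
  field_simp

lemma thermal_ineq (s lam : ℝ) (hs : 1 < s) (hlam : 1 ≤ lam) :
    (s - 1) / 2 * Real.log ((s - 1) * (lam * s + 1) / ((s + 1) * (lam * s - 1)))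
      + Real.log ((lam * s + 1) / (s + 1)) ≤ Real.log ((1 + lam) / 2) := by
  have hs1 : (0:ℝ) < s - 1 := by linarith
  have hs2 : (0:ℝ) < s + 1 := by linarith
  have hls : 1 < lam * s := by nlinarith
  have hl1 : (0:ℝ) < lam * s - 1 := by linarith
  have hl2 : (0:ℝ) < lam * s + 1 := by linarith
  set R : ℝ := (s - 1) * (lam * s + 1) / ((s + 1) * (lam * s - 1)) with hR
  have hRpos : 0 < R := div_pos (by positivity) (by positivity)
  have h1 : Real.log R ≤ R - 1 := Real.log_le_sub_one_of_pos hRpos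
  have h2 : Real.log ((lam * s + 1) / (s + 1)) - Real.log ((1 + lam) / 2)
      = Real.log (2 * (lam * s + 1) / ((1 + lam) * (s + 1))) := by
    rw [← Real.log_div (by positivity) (by positivity)]
    congr 1
    field_simp
  have h3 : Real.log (2 * (lam * s + 1) / ((1 + lam) * (s + 1)))
      ≤ 2 * (lam * s + 1) / ((1 + lam) * (s + 1)) - 1 :=
    Real.log_le_sub_one_of_pos (by positivity)
  -- key polynomial inequality
  have h4 : 2 * (lam * s + 1) / ((1 + lam) * (s + 1)) - 1 ≤ (s - 1) / 2 * (1 - R) := by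
    have e1 : 2 * (lam * s + 1) / ((1 + lam) * (s + 1)) - 1
        = (lam - 1) * (s - 1) / ((1 + lam) * (s + 1)) := by
      field_simp
      ring
    have e2 : (s - 1) / 2 * (1 - R)
        = s * (s - 1) * (lam - 1) / ((s + 1) * (lam * s - 1)) := by
      rw [hR]
      have hne : lam * s - 1 ≠ 0 := hl1.ne'
      rw [one_sub_div (by positivity), div_mul_div_comm, div_eq_div_iff (by positivity) (by positivity)]
      ring
    rw [e1, e2, div_le_div_iff₀ (by positivity) (by positivity)]
    nlinarith [mul_nonneg (mul_nonneg (mul_nonneg (sub_nonneg.2 hlam) hs1.le) hs2.le) hs2.le]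
  nlinarith [mul_le_mul_of_nonneg_left h1 (by linarith : (0:ℝ) ≤ (s - 1) / 2)]

/-- For `s, λ ≥ 1`, the Kullback–Leibler divergence between `μ_•(s)` and
`μ_•(λs)` is at most `log((1+λ)/2)`, with equality at `s = 1`. (Terms with
`μ_ℓ(s) = 0` vanish, as `0 * log(0/0) = 0` in Lean.) -/
theorem thermal_relative_entropy_le (s lam : ℝ) (hs : 1 ≤ s) (hlam : 1 ≤ lam) :
    (∑' ℓ : ℕ, thermalEigenvalue s ℓ *
          Real.log (thermalEigenvalue s ℓ / thermalEigenvalue (lam * s) ℓ)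
        ≤ Real.log ((1 + lam) / 2))
    ∧ (s = 1 →
      ∑' ℓ : ℕ, thermalEigenvalue s ℓ *
          Real.log (thermalEigenvalue s ℓ / thermalEigenvalue (lam * s) ℓ)
        = Real.log ((1 + lam) / 2)) := by
  have hcase : ∀ s' : ℝ, s' = 1 →
      ∑' ℓ : ℕ, thermalEigenvalue s' ℓ *
          Real.log (thermalEigenvalue s' ℓ / thermalEigenvalue (lam * s') ℓ)
        = Real.log ((1 + lam) / 2) := by
    intro s' hs'
    subst hs'
    have hterm : ∀ ℓ : ℕ, ℓ ≠ 0 → thermalEigenvalue 1 ℓ *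
        Real.log (thermalEigenvalue 1 ℓ / thermalEigenvalue (lam * 1) ℓ) = 0 := by
      intro ℓ hℓ
      have : thermalEigenvalue 1 ℓ = 0 := by
        simp [thermalEigenvalue, zero_pow hℓ]
      rw [this, zero_mul]
    rw [tsum_eq_single 0 hterm]
    have h0 : thermalEigenvalue 1 0 = 1 := by norm_num [thermalEigenvalue]
    have h1 : thermalEigenvalue (lam * 1) 0 = 2 / (lam + 1) := by
      norm_num [thermalEigenvalue]
    rw [h0, h1, one_mul, one_div_div]
    congr 1
    ring
  refine ⟨?_, hcase s⟩
  rcases eq_or_lt_of_le hs with h1 | h1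
  · rw [hcase s h1.symm]
  · rw [thermal_sum_eq s lam h1 hlam]
    exact thermal_ineq s lam h1 hlam
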